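/- Let k be a commutative ring and n ≥ 1. A polynomial P ∈ P_n = k[X_1,…,X_n] satisfies ∂_i(P) = 0 for all 1 ≤ i ≤ n−1 if and only if P is a symmetric polynomial, i.e., P is invariant under the action of every permutation in S_n. -/

import Mathlib

open MvPolynomial

private lemma cancel_X_sub_X (k : Type*) [CommRing k] (n : ℕ) {a b : Fin (n + 1)}
    (h : a ≠ b) (p : MvPolynomial (Fin (n + 1)) k)
    (hp : (X a - X b) * p = 0) : p = 0 := by
  classical
  have hc : (Equiv.swap (0 : Fin (n + 1)) a) b ≠ 0 := by
    by_cases hb : b = 0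
    · subst hb
      rw [Equiv.swap_apply_left]
      exact h
    · rw [Equiv.swap_apply_of_ne_of_ne hb (Ne.symm h)]
      exact hb
  obtain ⟨j, hj⟩ := Fin.exists_succ_eq.2 hc
  have h0 : finSuccEquiv k n (rename (⇑(Equiv.swap 0 a)) ((X a - X b) * p)) = 0 := by
    rw [hp]; simp
  rw [map_mul, map_mul, map_sub, map_sub, rename_X, rename_X,
    Equiv.swap_apply_right, ← hj, finSuccEquiv_X_zero, finSuccEquiv_X_succ] at h0
  have hmon : (Polynomial.X - Polynomial.C (X j) :
      Polynomial (MvPolynomial (Fin n) k)).Monic := Polynomial.monic_X_sub_C _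
  have h1 : finSuccEquiv k n (rename (⇑(Equiv.swap 0 a)) p) = 0 := by
    apply hmon.isRegular.left
    show (Polynomial.X - Polynomial.C (X j)) * _ = (Polynomial.X - Polynomial.C (X j)) * _
    rw [mul_zero]; exact h0
  have h2 : rename (⇑(Equiv.swap 0 a)) p = 0 := by
    apply (finSuccEquiv k n).injective
    rw [h1]; simp
  exact (rename_injective _ (Equiv.swap 0 a).injective) (by rw [h2]; simp)

theorem demazure_kernel_eq_symmetric (k : Type*) [CommRing k] (n : ℕ)
    (D : Fin n → MvPolynomial (Fin (n + 1)) k →ₗ[k] MvPolynomial (Fin (n + 1)) k)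
    (hD : ∀ (i : Fin n) (P : MvPolynomial (Fin (n + 1)) k),
      (X i.succ - X i.castSucc) * D i P =
        P - rename (Equiv.swap i.castSucc i.succ) P)
    (P : MvPolynomial (Fin (n + 1)) k) :
    (∀ i : Fin n, D i P = 0) ↔ P.IsSymmetric := by
  constructor
  · intro h
    have hswap : ∀ i : Fin n, rename (⇑(Equiv.swap i.castSucc i.succ)) P = P := by
      intro i
      have h2 := hD i P
      rw [h i, mul_zero] at h2
      exact (sub_eq_zero.mp h2.symm).symm
    intro e
    have he : e ∈ Submonoid.closure
        (Set.range fun i : Fin n ↦ Equiv.swap i.castSucc i.succ) := by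
      rw [Equiv.Perm.mclosure_swap_castSucc_succ]; trivial
    induction he using Submonoid.closure_induction with
    | mem x hx =>
      obtain ⟨i, rfl⟩ := hx
      exact hswap i
    | one =>
      show rename (⇑(1 : Equiv.Perm (Fin (n + 1)))) P = P
      simp [Equiv.Perm.coe_one]
    | mul x y hx hy ihx ihy =>
      show rename (⇑(x * y)) P = P
      have hxy : ⇑(x * y) = ⇑x ∘ ⇑y := rfl
      rw [hxy, ← rename_rename, ihy, ihx]
  · intro h i
    have h2 := hD i P
    rw [h _, sub_self] at h2
    have hne : i.succ ≠ i.castSucc := (Fin.castSucc_lt_succ (i := i)).ne'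
    exact cancel_X_sub_X k n hne _ h2
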